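/- Let (E, ℰ) be a measurable space and let X₁, X₂, … be independent and identically distributed E-valued random elements on a probability space. Let B ⊆ ℝ^d be compact, and let f : ℝ^d × E → ℝ be such that f(θ, ·) is measurable for each θ, and there are constants M > 0 and κ > 0 with |f(θ, x)| ≤ M for all θ ∈ B and x ∈ E, and |f(θ, x) − f(θ', x)| ≤ κ·‖θ − θ'‖₁ for all θ, θ' ∈ B and x ∈ E. Then for every ε > 0 there exist K ∈ ℕ and D > 0 such that for every T ≥ 1, P( sup_{θ ∈ B} | (1/T)·Σ_{t=1}^T ( f(θ, X_t) − E[f(θ, X₁)] ) | ≥ ε ) ≤ 2K·exp(−D·T). -/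

import Mathlib

open MeasureTheory ProbabilityTheory Real

lemma my_integrable {Ω : Type*} [MeasurableSpace Ω] (P : Measure Ω) [IsFiniteMeasure P]
    {g : Ω → ℝ} (hg : Measurable g) {C : ℝ} (h : ∀ ω, |g ω| ≤ C) : Integrable g P :=
  ⟨hg.aestronglyMeasurable,
    HasFiniteIntegral.of_bounded (C := C) (Filter.Eventually.of_forall fun ω => by
      simpa [Real.norm_eq_abs] using h ω)⟩

lemma my_mgf_le {Ω : Type*} [MeasurableSpace Ω] (P : Measure Ω) [IsProbabilityMeasure P]
    {Y : Ω → ℝ} (hY : Measurable Y) {c : ℝ} (hc : 0 < c) (hb : ∀ ω, |Y ω| ≤ c)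
    (hzero : ∫ ω, Y ω ∂P = 0) {s : ℝ} (hs : 0 ≤ s) :
    mgf Y P s ≤ Real.exp (s ^ 2 * c ^ 2 / 2) := by
  have hYint : Integrable Y P := my_integrable P hY hb
  have hconv : ∀ ω, Real.exp (s * Y ω) ≤
      ((c - Y ω) / (2 * c)) * Real.exp (-(s * c)) + ((c + Y ω) / (2 * c)) * Real.exp (s * c) := by
    intro ω
    have h1 := abs_le.mp (hb ω)
    have key := convexOn_exp.2 (Set.mem_univ (-(s * c))) (Set.mem_univ (s * c))
      (show (0:ℝ) ≤ (c - Y ω) / (2 * c) from div_nonneg (by linarith [h1.2]) (by linarith))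
      (show (0:ℝ) ≤ (c + Y ω) / (2 * c) from div_nonneg (by linarith [h1.1]) (by linarith))
      (show (c - Y ω) / (2 * c) + (c + Y ω) / (2 * c) = 1 by field_simp; ring)
    simp only [smul_eq_mul] at key
    have harg : (c - Y ω) / (2 * c) * (-(s * c)) + (c + Y ω) / (2 * c) * (s * c) = s * Y ω := by
      rw [div_mul_eq_mul_div, div_mul_eq_mul_div, ← add_div,
        div_eq_iff (show (2:ℝ) * c ≠ 0 by positivity)]
      ring
    rw [harg] at key
    exact key
  have hexp_int : Integrable (fun ω => Real.exp (s * Y ω)) P := by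
    refine my_integrable P (by fun_prop) (C := Real.exp (s * c)) fun ω => ?_
    rw [abs_of_pos (Real.exp_pos _)]
    exact Real.exp_le_exp.mpr (by nlinarith [abs_le.mp (hb ω), hb ω])
  have hrhs_int : Integrable (fun ω =>
      ((c - Y ω) / (2 * c)) * Real.exp (-(s * c)) + ((c + Y ω) / (2 * c)) * Real.exp (s * c)) P := by
    apply Integrable.add
    · exact (((integrable_const c).sub hYint).div_const _).mul_const _
    · exact (((integrable_const c).add hYint).div_const _).mul_const _
  have hint_le := integral_mono hexp_int hrhs_int hconv
  have hval : ∫ ω, (((c - Y ω) / (2 * c)) * Real.exp (-(s * c))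
      + ((c + Y ω) / (2 * c)) * Real.exp (s * c)) ∂P = Real.cosh (s * c) := by
    have hrw : ∀ ω, ((c - Y ω) / (2 * c)) * Real.exp (-(s * c))
        + ((c + Y ω) / (2 * c)) * Real.exp (s * c)
        = Y ω * ((Real.exp (s * c) - Real.exp (-(s * c))) / (2 * c))
          + (Real.exp (-(s * c)) + Real.exp (s * c)) / 2 := by
      intro ω; field_simp; ring
    simp_rw [hrw]
    rw [integral_add (hYint.mul_const _) (integrable_const _), integral_mul_const, hzero,
      integral_const]
    simp [measure_univ, Real.cosh_eq]
    ring
  calc mgf Y P s = ∫ ω, Real.exp (s * Y ω) ∂P := rfl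
    _ ≤ Real.cosh (s * c) := by rw [← hval]; exact hint_le
    _ ≤ Real.exp ((s * c) ^ 2 / 2) := Real.cosh_le_exp_half_sq _
    _ = Real.exp (s ^ 2 * c ^ 2 / 2) := by ring_nf

lemma my_tail {Ω : Type*} [MeasurableSpace Ω] (P : Measure Ω) [IsProbabilityMeasure P]
    (Y : ℕ → Ω → ℝ) (hmeas : ∀ t, Measurable (Y t))
    (hindep : iIndepFun (m := fun _ => inferInstance) Y P)
    {c : ℝ} (hc : 0 < c) (hb : ∀ t ω, |Y t ω| ≤ c) (hzero : ∀ t, ∫ ω, Y t ω ∂P = 0)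
    {ε : ℝ} (hε : 0 < ε) (T : ℕ) :
    P {ω | (T : ℝ) * ε ≤ ∑ t ∈ Finset.range T, Y t ω} ≤
      ENNReal.ofReal (Real.exp (-(ε ^ 2 / (2 * c ^ 2)) * T)) := by
  set s : ℝ := ε / c ^ 2 with hs_def
  have hs : 0 ≤ s := by positivity
  have h_int : ∀ t, Integrable (fun ω => Real.exp (s * Y t ω)) P := by
    intro t
    refine my_integrable P (by fun_prop) (C := Real.exp (s * c)) fun ω => ?_
    rw [abs_of_pos (Real.exp_pos _)]
    exact Real.exp_le_exp.mpr (by nlinarith [abs_le.mp (hb t ω)])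
  have h_int_sum : Integrable (fun ω => Real.exp (s * (∑ t ∈ Finset.range T, Y t) ω)) P :=
    hindep.integrable_exp_mul_sum hmeas fun t _ => h_int t
  have chernoff := measure_ge_le_exp_mul_mgf (μ := P) (X := ∑ t ∈ Finset.range T, Y t)
    ((T : ℝ) * ε) hs h_int_sum
  have hmgf : mgf (∑ t ∈ Finset.range T, Y t) P s ≤ Real.exp ((T : ℝ) * (s ^ 2 * c ^ 2 / 2)) := by
    rw [hindep.mgf_sum hmeas]
    calc ∏ t ∈ Finset.range T, mgf (Y t) P s
        ≤ ∏ t ∈ Finset.range T, Real.exp (s ^ 2 * c ^ 2 / 2) :=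
          Finset.prod_le_prod (fun t _ => mgf_nonneg)
            (fun t _ => my_mgf_le P (hmeas t) hc (hb t) (hzero t) hs)
      _ = Real.exp ((T : ℝ) * (s ^ 2 * c ^ 2 / 2)) := by
          rw [Finset.prod_const, Finset.card_range, ← Real.exp_nat_mul]
  have hbound : (P {ω | (T : ℝ) * ε ≤ (∑ t ∈ Finset.range T, Y t) ω}).toReal ≤
      Real.exp (-(ε ^ 2 / (2 * c ^ 2)) * T) := by
    calc (P {ω | (T : ℝ) * ε ≤ (∑ t ∈ Finset.range T, Y t) ω}).toReal
        ≤ Real.exp (-s * ((T : ℝ) * ε)) * mgf (∑ t ∈ Finset.range T, Y t) P s := chernoff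
      _ ≤ Real.exp (-s * ((T : ℝ) * ε)) * Real.exp ((T : ℝ) * (s ^ 2 * c ^ 2 / 2)) := by
          gcongr
      _ = Real.exp (-(ε ^ 2 / (2 * c ^ 2)) * T) := by
          rw [← Real.exp_add]
          congr 1
          have hc2 : (c : ℝ) ^ 2 ≠ 0 := by positivity
          rw [hs_def]; field_simp
          ring
  have hset : {ω | (T : ℝ) * ε ≤ ∑ t ∈ Finset.range T, Y t ω} =
      {ω | (T : ℝ) * ε ≤ (∑ t ∈ Finset.range T, Y t) ω} := by
    simp [Finset.sum_apply]
  rw [hset, ← ENNReal.ofReal_toReal (measure_ne_top P _)]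
  exact ENNReal.ofReal_le_ofReal hbound

theorem uniform_exponential_concentration
    {Ω E : Type*} [MeasurableSpace Ω] {mE : MeasurableSpace E}
    (P : Measure Ω) [IsProbabilityMeasure P]
    (X : ℕ → Ω → E) (hXmeas : ∀ t, Measurable (X t))
    (hindep : iIndepFun (m := fun _ => mE) X P)
    (hident : ∀ t, IdentDistrib (X t) (X 0) P P)
    {d : ℕ} (B : Set (Fin d → ℝ)) (hB : IsCompact B)
    (f : (Fin d → ℝ) → E → ℝ) (hfmeas : ∀ θ, Measurable (f θ))
    (M κ : ℝ) (hM : 0 < M) (hκ : 0 < κ)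
    (hbd : ∀ θ ∈ B, ∀ x, |f θ x| ≤ M)
    (hlip : ∀ θ ∈ B, ∀ θ' ∈ B, ∀ x,
      |f θ x - f θ' x| ≤ κ * ∑ j : Fin d, |θ j - θ' j|) :
    ∀ ε : ℝ, 0 < ε → ∃ (K : ℕ) (D : ℝ), 0 < D ∧ ∀ T : ℕ, 1 ≤ T →
      P {ω | ε ≤ ⨆ θ : B, |(1 / (T : ℝ)) *
          ∑ t ∈ Finset.range T, (f θ (X t ω) - ∫ ω', f θ (X 0 ω') ∂P)|} ≤
        ENNReal.ofReal (2 * K * Real.exp (-D * T)) := by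
  classical
  intro ε hε
  -- basic facts
  have hintf : ∀ θ ∈ B, ∀ t, Integrable (fun ω => f θ (X t ω)) P := fun θ hθ t =>
    my_integrable P ((hfmeas θ).comp (hXmeas t)) (fun ω => hbd θ hθ (X t ω))
  have hμbd : ∀ θ ∈ B, |∫ ω', f θ (X 0 ω') ∂P| ≤ M := by
    intro θ hθ
    have h := norm_integral_le_of_norm_le (μ := P) (f := fun ω' => f θ (X 0 ω'))
      (integrable_const M) (Filter.Eventually.of_forall fun ω' => by
        simpa [Real.norm_eq_abs] using hbd θ hθ (X 0 ω'))
    simpa [Real.norm_eq_abs, integral_const, measure_univ] using h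
  have hYbd : ∀ θ ∈ B, ∀ t ω, |f θ (X t ω) - ∫ ω', f θ (X 0 ω') ∂P| ≤ 2 * M := by
    intro θ hθ t ω
    have h1 := hbd θ hθ (X t ω)
    have h2 := hμbd θ hθ
    calc |f θ (X t ω) - ∫ ω', f θ (X 0 ω') ∂P|
        ≤ |f θ (X t ω)| + |∫ ω', f θ (X 0 ω') ∂P| := abs_sub _ _
      _ ≤ 2 * M := by linarith
  have hYzero : ∀ θ ∈ B, ∀ t,
      ∫ ω, (f θ (X t ω) - ∫ ω', f θ (X 0 ω') ∂P) ∂P = 0 := by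
    intro θ hθ t
    have h0 : ∫ ω, f θ (X t ω) ∂P = ∫ ω, f θ (X 0 ω) ∂P :=
      ((hident t).comp (hfmeas θ)).integral_eq
    rw [integral_sub (hintf θ hθ t) (integrable_const _), h0, integral_const]
    simp [measure_univ]
  -- covering
  have hδ : (0:ℝ) < ε / (8 * κ * ((d:ℝ) + 1)) := by positivity
  set δ : ℝ := ε / (8 * κ * ((d:ℝ) + 1)) with hδ_def
  obtain ⟨C, hCB, hCfin, hCcover⟩ := hB.elim_finite_subcover_image
    (fun θ (_ : θ ∈ B) => Metric.isOpen_ball (x := θ) (ε := δ))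
    (fun θ hθ => Set.mem_biUnion hθ (Metric.mem_ball_self hδ))
  refine ⟨hCfin.toFinset.card, ε ^ 2 / (32 * M ^ 2), by positivity, ?_⟩
  intro T hT
  have hT0 : (0:ℝ) < T := by exact_mod_cast Nat.lt_of_lt_of_le Nat.zero_lt_one hT
  -- key inclusion
  have hsub : {ω | ε ≤ ⨆ θ : B, |(1 / (T : ℝ)) *
        ∑ t ∈ Finset.range T, (f θ (X t ω) - ∫ ω', f θ (X 0 ω') ∂P)|} ⊆
      ⋃ θ₁ ∈ hCfin.toFinset,
        ({ω | (T:ℝ) * (ε/2) ≤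
            ∑ t ∈ Finset.range T, (f θ₁ (X t ω) - ∫ ω', f θ₁ (X 0 ω') ∂P)} ∪
         {ω | (T:ℝ) * (ε/2) ≤
            ∑ t ∈ Finset.range T, -(f θ₁ (X t ω) - ∫ ω', f θ₁ (X 0 ω') ∂P)}) := by
    intro ω hω
    simp only [Set.mem_setOf_eq] at hω
    rcases isEmpty_or_nonempty B with hE | hNE
    · rw [Real.iSup_of_isEmpty] at hω; linarith
    -- uniform bound on each term
    have habs : ∀ θ : B, |(1 / (T : ℝ)) *
        ∑ t ∈ Finset.range T, (f θ (X t ω) - ∫ ω', f θ (X 0 ω') ∂P)| ≤ 2 * M := by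
      intro θ
      have h1 : |∑ t ∈ Finset.range T, (f θ (X t ω) - ∫ ω', f θ (X 0 ω') ∂P)| ≤
          (T:ℝ) * (2 * M) := by
        refine (Finset.abs_sum_le_sum_abs _ _).trans ?_
        have := Finset.sum_le_card_nsmul (Finset.range T)
          (fun t => |f θ (X t ω) - ∫ ω', f θ (X 0 ω') ∂P|) (2 * M)
          (fun t _ => hYbd θ θ.2 t ω)
        simpa [Finset.card_range, nsmul_eq_mul] using this
      rw [abs_mul, abs_of_pos (by positivity : (0:ℝ) < 1 / (T:ℝ))]
      calc (1 / (T:ℝ)) * |∑ t ∈ Finset.range T, (f θ (X t ω) - ∫ ω', f θ (X 0 ω') ∂P)|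
          ≤ (1 / (T:ℝ)) * ((T:ℝ) * (2 * M)) := by gcongr
        _ = 2 * M := by field_simp
    have hex : ∃ θ₀ : B, 3 * ε / 4 ≤ |(1 / (T : ℝ)) *
        ∑ t ∈ Finset.range T, (f θ₀ (X t ω) - ∫ ω', f θ₀ (X 0 ω') ∂P)| := by
      by_contra h
      push_neg at h
      have := ciSup_le (fun θ : B => (h θ).le)
      linarith
    obtain ⟨θ₀, hθ₀⟩ := hex
    have hcov := hCcover θ₀.2
    rw [Set.mem_iUnion₂] at hcov
    obtain ⟨θ₁, hθ₁C, hball⟩ := hcov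
    have hθ₁B : θ₁ ∈ B := hCB hθ₁C
    -- ℓ1 distance bound
    have hL : ∑ j : Fin d, |(θ₀ : Fin d → ℝ) j - θ₁ j| ≤ (d:ℝ) * δ := by
      have hj : ∀ j : Fin d, |(θ₀ : Fin d → ℝ) j - θ₁ j| ≤ δ := by
        intro j
        have h1 : dist ((θ₀ : Fin d → ℝ) j) (θ₁ j) ≤ dist (θ₀ : Fin d → ℝ) θ₁ :=
          dist_le_pi_dist _ _ j
        have h2 : dist (θ₀ : Fin d → ℝ) θ₁ < δ := Metric.mem_ball.mp hball
        rw [Real.dist_eq] at h1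
        linarith
      have := Finset.sum_le_card_nsmul Finset.univ
        (fun j => |(θ₀ : Fin d → ℝ) j - θ₁ j|) δ (fun j _ => hj j)
      simpa [nsmul_eq_mul] using this
    have hLε : 2 * (κ * ((d:ℝ) * δ)) ≤ ε / 4 := by
      have h1 : (d:ℝ) / ((d:ℝ) + 1) ≤ 1 :=
        div_le_one_of_le₀ (by linarith) (by positivity)
      have heq : 2 * (κ * ((d:ℝ) * δ)) = ((d:ℝ) / ((d:ℝ) + 1)) * (ε / 4) := by
        rw [hδ_def]; field_simp; ring
      rw [heq]
      calc ((d:ℝ) / ((d:ℝ) + 1)) * (ε / 4) ≤ 1 * (ε / 4) := by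
            exact mul_le_mul_of_nonneg_right h1 (by positivity)
        _ = ε / 4 := one_mul _
    -- means are close
    have hμdiff : |(∫ ω', f θ₀ (X 0 ω') ∂P) - ∫ ω', f θ₁ (X 0 ω') ∂P| ≤
        κ * ∑ j : Fin d, |(θ₀ : Fin d → ℝ) j - θ₁ j| := by
      rw [← integral_sub (hintf θ₀ θ₀.2 0) (hintf θ₁ hθ₁B 0)]
      have h := norm_integral_le_of_norm_le (μ := P)
        (f := fun ω' => f θ₀ (X 0 ω') - f θ₁ (X 0 ω'))
        (integrable_const (κ * ∑ j : Fin d, |(θ₀ : Fin d → ℝ) j - θ₁ j|))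
        (Filter.Eventually.of_forall fun ω' => by
          simpa [Real.norm_eq_abs] using hlip θ₀ θ₀.2 θ₁ hθ₁B (X 0 ω'))
      simpa [Real.norm_eq_abs, integral_const, measure_univ] using h
    -- difference of averages
    have hdiff : |(1 / (T : ℝ)) *
          ∑ t ∈ Finset.range T, (f θ₀ (X t ω) - ∫ ω', f θ₀ (X 0 ω') ∂P) -
        (1 / (T : ℝ)) *
          ∑ t ∈ Finset.range T, (f θ₁ (X t ω) - ∫ ω', f θ₁ (X 0 ω') ∂P)| ≤ ε / 4 := by
      rw [← mul_sub, ← Finset.sum_sub_distrib]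
      have hterm : ∀ t ∈ Finset.range T,
          |(f θ₀ (X t ω) - ∫ ω', f θ₀ (X 0 ω') ∂P) -
            (f θ₁ (X t ω) - ∫ ω', f θ₁ (X 0 ω') ∂P)| ≤ 2 * (κ * ((d:ℝ) * δ)) := by
        intro t _
        have h1 := hlip θ₀ θ₀.2 θ₁ hθ₁B (X t ω)
        have h2 := hμdiff
        have h3 : κ * ∑ j : Fin d, |(θ₀ : Fin d → ℝ) j - θ₁ j| ≤ κ * ((d:ℝ) * δ) :=
          mul_le_mul_of_nonneg_left hL hκ.le
        calc |(f θ₀ (X t ω) - ∫ ω', f θ₀ (X 0 ω') ∂P) -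
              (f θ₁ (X t ω) - ∫ ω', f θ₁ (X 0 ω') ∂P)|
            = |(f θ₀ (X t ω) - f θ₁ (X t ω)) -
              ((∫ ω', f θ₀ (X 0 ω') ∂P) - ∫ ω', f θ₁ (X 0 ω') ∂P)| := by ring_nf
          _ ≤ |f θ₀ (X t ω) - f θ₁ (X t ω)| +
              |(∫ ω', f θ₀ (X 0 ω') ∂P) - ∫ ω', f θ₁ (X 0 ω') ∂P| := abs_sub _ _
          _ ≤ 2 * (κ * ((d:ℝ) * δ)) := by linarith
      have hsum : |∑ t ∈ Finset.range T,
          ((f θ₀ (X t ω) - ∫ ω', f θ₀ (X 0 ω') ∂P) -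
            (f θ₁ (X t ω) - ∫ ω', f θ₁ (X 0 ω') ∂P))| ≤ (T:ℝ) * (2 * (κ * ((d:ℝ) * δ))) := by
        refine (Finset.abs_sum_le_sum_abs _ _).trans ?_
        have := Finset.sum_le_card_nsmul (Finset.range T) _ _ hterm
        simpa [Finset.card_range, nsmul_eq_mul] using this
      rw [abs_mul, abs_of_pos (by positivity : (0:ℝ) < 1 / (T:ℝ))]
      calc (1 / (T:ℝ)) * |∑ t ∈ Finset.range T,
            ((f θ₀ (X t ω) - ∫ ω', f θ₀ (X 0 ω') ∂P) -
              (f θ₁ (X t ω) - ∫ ω', f θ₁ (X 0 ω') ∂P))|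
          ≤ (1 / (T:ℝ)) * ((T:ℝ) * (2 * (κ * ((d:ℝ) * δ)))) := by gcongr
        _ = 2 * (κ * ((d:ℝ) * δ)) := by field_simp
        _ ≤ ε / 4 := hLε
    have hbig : ε / 2 ≤ |(1 / (T : ℝ)) *
        ∑ t ∈ Finset.range T, (f θ₁ (X t ω) - ∫ ω', f θ₁ (X 0 ω') ∂P)| := by
      have h2 := abs_sub_abs_le_abs_sub
        ((1 / (T : ℝ)) * ∑ t ∈ Finset.range T, (f θ₀ (X t ω) - ∫ ω', f θ₀ (X 0 ω') ∂P))
        ((1 / (T : ℝ)) * ∑ t ∈ Finset.range T, (f θ₁ (X t ω) - ∫ ω', f θ₁ (X 0 ω') ∂P))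
      linarith
    have hTS : (T:ℝ) * (ε/2) ≤
        |∑ t ∈ Finset.range T, (f θ₁ (X t ω) - ∫ ω', f θ₁ (X 0 ω') ∂P)| := by
      rw [abs_mul, abs_of_pos (by positivity : (0:ℝ) < 1 / (T:ℝ)), one_div] at hbig
      calc (T:ℝ) * (ε/2) ≤ (T:ℝ) * ((T:ℝ)⁻¹ *
          |∑ t ∈ Finset.range T, (f θ₁ (X t ω) - ∫ ω', f θ₁ (X 0 ω') ∂P)|) := by gcongr
        _ = |∑ t ∈ Finset.range T, (f θ₁ (X t ω) - ∫ ω', f θ₁ (X 0 ω') ∂P)| := by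
            field_simp
    rw [Set.mem_iUnion₂]
    refine ⟨θ₁, hCfin.mem_toFinset.mpr hθ₁C, ?_⟩
    rcases le_abs.mp hTS with hpos | hneg
    · exact Or.inl hpos
    · exact Or.inr (by simpa [Finset.sum_neg_distrib] using hneg)
  -- measure computation
  have hεkey : (ε/2) ^ 2 / (2 * (2*M) ^ 2) = ε ^ 2 / (32 * M ^ 2) := by ring
  have htail : ∀ θ₁ ∈ hCfin.toFinset,
      P ({ω | (T:ℝ) * (ε/2) ≤
            ∑ t ∈ Finset.range T, (f θ₁ (X t ω) - ∫ ω', f θ₁ (X 0 ω') ∂P)} ∪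
         {ω | (T:ℝ) * (ε/2) ≤
            ∑ t ∈ Finset.range T, -(f θ₁ (X t ω) - ∫ ω', f θ₁ (X 0 ω') ∂P)}) ≤
      ENNReal.ofReal (Real.exp (-(ε ^ 2 / (32 * M ^ 2)) * T)) +
      ENNReal.ofReal (Real.exp (-(ε ^ 2 / (32 * M ^ 2)) * T)) := by
    intro θ₁ hθ₁
    have hθ₁B : θ₁ ∈ B := hCB (hCfin.mem_toFinset.mp hθ₁)
    have hindepY : iIndepFun (m := fun _ => inferInstance)
        (fun t ω => f θ₁ (X t ω) - ∫ ω', f θ₁ (X 0 ω') ∂P) P :=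
      hindep.comp (fun _ x => f θ₁ x - ∫ ω', f θ₁ (X 0 ω') ∂P)
        (fun _ => (hfmeas θ₁).sub measurable_const)
    have hindepY' : iIndepFun (m := fun _ => inferInstance)
        (fun t ω => -(f θ₁ (X t ω) - ∫ ω', f θ₁ (X 0 ω') ∂P)) P :=
      hindep.comp (fun _ x => -(f θ₁ x - ∫ ω', f θ₁ (X 0 ω') ∂P))
        (fun _ => ((hfmeas θ₁).sub measurable_const).neg)
    have t1 := my_tail P (fun t ω => f θ₁ (X t ω) - ∫ ω', f θ₁ (X 0 ω') ∂P)
      (fun t => ((hfmeas θ₁).comp (hXmeas t)).sub measurable_const) hindepY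
      (by positivity : (0:ℝ) < 2 * M) (fun t ω => hYbd θ₁ hθ₁B t ω)
      (fun t => hYzero θ₁ hθ₁B t) (by positivity : (0:ℝ) < ε/2) T
    have t2 := my_tail P (fun t ω => -(f θ₁ (X t ω) - ∫ ω', f θ₁ (X 0 ω') ∂P))
      (fun t => (((hfmeas θ₁).comp (hXmeas t)).sub measurable_const).neg) hindepY'
      (by positivity : (0:ℝ) < 2 * M)
      (fun t ω => by rw [abs_neg]; exact hYbd θ₁ hθ₁B t ω)
      (fun t => by rw [integral_neg, hYzero θ₁ hθ₁B t, neg_zero])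
      (by positivity : (0:ℝ) < ε/2) T
    rw [hεkey] at t1 t2
    exact (measure_union_le _ _).trans (add_le_add t1 t2)
  calc P {ω | ε ≤ ⨆ θ : B, |(1 / (T : ℝ)) *
          ∑ t ∈ Finset.range T, (f θ (X t ω) - ∫ ω', f θ (X 0 ω') ∂P)|}
      ≤ P (⋃ θ₁ ∈ hCfin.toFinset,
        ({ω | (T:ℝ) * (ε/2) ≤
            ∑ t ∈ Finset.range T, (f θ₁ (X t ω) - ∫ ω', f θ₁ (X 0 ω') ∂P)} ∪
         {ω | (T:ℝ) * (ε/2) ≤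
            ∑ t ∈ Finset.range T, -(f θ₁ (X t ω) - ∫ ω', f θ₁ (X 0 ω') ∂P)})) :=
        measure_mono hsub
    _ ≤ ∑ θ₁ ∈ hCfin.toFinset, P
        ({ω | (T:ℝ) * (ε/2) ≤
            ∑ t ∈ Finset.range T, (f θ₁ (X t ω) - ∫ ω', f θ₁ (X 0 ω') ∂P)} ∪
         {ω | (T:ℝ) * (ε/2) ≤
            ∑ t ∈ Finset.range T, -(f θ₁ (X t ω) - ∫ ω', f θ₁ (X 0 ω') ∂P)}) :=
        measure_biUnion_finset_le _ _
    _ ≤ ∑ _θ₁ ∈ hCfin.toFinset,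
        (ENNReal.ofReal (Real.exp (-(ε ^ 2 / (32 * M ^ 2)) * T)) +
         ENNReal.ofReal (Real.exp (-(ε ^ 2 / (32 * M ^ 2)) * T))) :=
        Finset.sum_le_sum htail
    _ = ENNReal.ofReal (2 * hCfin.toFinset.card * Real.exp (-(ε ^ 2 / (32 * M ^ 2)) * T)) := by
        rw [Finset.sum_const, nsmul_eq_mul]
        rw [ENNReal.ofReal_mul (by positivity), ENNReal.ofReal_mul (by positivity)]
        rw [← ENNReal.ofReal_natCast, ENNReal.ofReal_ofNat]
        ring
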